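/- Let (Ω, μ) be a finite measure space and p ∈ (0,1). Let (ε_k) be a sequence of positive reals with ε_k → 0, and let (w_k), (v_k) be sequences in L²(Ω, μ) with w_k → w and v_k → w in L²(Ω, μ). Assume furthermore that ∫_Ω ψ_{ε_k}'(w_k(x)²)·(v_k(x) − w_k(x))² dμ(x) → 0. Then ∫_Ω 2 ψ_{ε_k}'(w_k(x)²) · v_k(x)² dμ(x) → p ∫_Ω |w(x)|^p dμ(x). -/

import Mathlib

open MeasureTheory Filter
open scoped NNReal

/-- The derivative `ψ_ε'` of the smoothed `p/2`-power function (for `ε > 0`). -/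
noncomputable def psiD (p ε t : ℝ) : ℝ :=
  if t = 0 then (p / 2) * ε ^ (p - 2)
  else (p / 2) * min (ε ^ (p - 2)) (t ^ ((p - 2) / 2))

lemma psiD_measurable (p ε : ℝ) : Measurable (psiD p ε) := by
  apply measurable_of_continuousOn_compl_singleton 0
  have h : ContinuousOn (fun t : ℝ => (p / 2) * min (ε ^ (p - 2)) (t ^ ((p - 2) / 2)))
      ({(0:ℝ)}ᶜ) :=
    continuousOn_const.mul (continuousOn_const.inf
      (continuousOn_id.rpow_const (fun x hx => Or.inl hx)))
  exact h.congr (fun t ht => if_neg ht)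

lemma psiD_nonneg {p ε : ℝ} (hp : 0 < p) (hε : 0 ≤ ε) {t : ℝ} (ht : 0 ≤ t) :
    0 ≤ psiD p ε t := by
  unfold psiD
  have h1 : (0:ℝ) ≤ ε ^ (p-2) := Real.rpow_nonneg hε _
  have h2 : (0:ℝ) ≤ t ^ ((p-2)/2) := Real.rpow_nonneg ht _
  split
  · exact mul_nonneg (by linarith) h1
  · exact mul_nonneg (by linarith) (le_min h1 h2)

lemma psiD_le {p : ℝ} (hp : 0 < p) (ε t : ℝ) : psiD p ε t ≤ p / 2 * ε ^ (p - 2) := by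
  unfold psiD
  split
  · exact le_refl _
  · exact mul_le_mul_of_nonneg_left (min_le_left _ _) (by linarith)

lemma sq_rpow {x : ℝ} (hx : 0 ≤ x) (q : ℝ) : (x ^ 2) ^ q = x ^ (2 * q) := by
  rw [← Real.rpow_natCast x 2, ← Real.rpow_mul hx]
  norm_num

lemma two_psiD_mul_sq_eq {p ε : ℝ} {b : ℝ} (hb : b ≠ 0) :
    2 * psiD p ε (b ^ 2) * b ^ 2 = p * min (ε ^ (p - 2) * b ^ 2) (|b| ^ p) := by
  have hb2 : (0:ℝ) < b ^ 2 := by positivity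
  unfold psiD
  rw [if_neg hb2.ne']
  have habs : (b ^ 2 : ℝ) ^ ((p-2)/2) * b ^ 2 = |b| ^ p := by
    rw [← sq_abs, sq_rpow (abs_nonneg b), ← Real.rpow_natCast |b| 2,
      ← Real.rpow_add (abs_pos.mpr hb)]
    ring_nf
  rw [← habs, show 2 * (p / 2 * min (ε ^ (p-2)) ((b^2) ^ ((p-2)/2))) * b ^ 2
      = p * (min (ε ^ (p-2)) ((b^2) ^ ((p-2)/2)) * b ^ 2) by ring,
    min_mul_of_nonneg _ _ hb2.le]

lemma two_psiD_mul_sq_le {p ε : ℝ} (hp : 0 < p) (b : ℝ) :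
    2 * psiD p ε (b ^ 2) * b ^ 2 ≤ p * |b| ^ p := by
  rcases eq_or_ne b 0 with rfl | hb
  · simp [Real.zero_rpow hp.ne', abs_nonneg, Real.rpow_nonneg]
  · rw [two_psiD_mul_sq_eq hb]
    exact mul_le_mul_of_nonneg_left (min_le_right _ _) hp.le

lemma le_two_psiD_mul_sq {p ε : ℝ} (hp : 0 < p) (hp2 : p < 2) (hε : 0 < ε) (b : ℝ) :
    p * |b| ^ p - p * ε ^ p ≤ 2 * psiD p ε (b ^ 2) * b ^ 2 := by
  have hεp : (0:ℝ) ≤ ε ^ p := Real.rpow_nonneg hε.le _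
  rcases eq_or_ne b 0 with rfl | hb
  · simp only [abs_zero, Real.zero_rpow hp.ne', mul_zero, ne_eq, zero_pow, psiD]
    norm_num
    positivity
  · rw [two_psiD_mul_sq_eq hb, ← mul_sub]
    refine mul_le_mul_of_nonneg_left (le_min ?_ ?_) hp.le
    · rcases le_or_gt (b ^ 2) (ε ^ 2) with h | h
      · have h1 : |b| ^ p ≤ ε ^ p := by
          have : |b| ≤ ε := by nlinarith [abs_nonneg b, sq_abs b]
          exact Real.rpow_le_rpow (abs_nonneg b) this hp.le
        have h2 : (0:ℝ) ≤ ε ^ (p-2) * b ^ 2 := by positivity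
        linarith
      · have hbp : |b| ^ p = (b ^ 2 : ℝ) ^ ((p-2)/2) * b ^ 2 := by
          rw [← sq_abs, sq_rpow (abs_nonneg b), ← Real.rpow_natCast |b| 2,
            ← Real.rpow_add (abs_pos.mpr hb)]
          ring_nf
        have hmono : (b ^ 2 : ℝ) ^ ((p-2)/2) ≤ ε ^ (p-2) := by
          have h1 : (ε ^ 2 : ℝ) ^ ((p-2)/2) = ε ^ (p-2) := by
            rw [sq_rpow hε.le]; ring_nf
          rw [← h1]
          exact Real.rpow_le_rpow_of_nonpos (by positivity) h.le (by linarith)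
        have hb2 : (0:ℝ) ≤ b ^ 2 := by positivity
        nlinarith [mul_le_mul_of_nonneg_right hmono hb2]
    · linarith

lemma real_rpow_add_le {x y q : ℝ} (hx : 0 ≤ x) (hy : 0 ≤ y) (hq : 0 ≤ q) (hq1 : q ≤ 1) :
    (x + y) ^ q ≤ x ^ q + y ^ q := by
  have h := NNReal.rpow_add_le_add_rpow x.toNNReal y.toNNReal hq hq1
  have hxy : ((x.toNNReal + y.toNNReal : ℝ≥0) : ℝ) = x + y := by
    simp [Real.coe_toNNReal _ hx, Real.coe_toNNReal _ hy]
  calc (x + y) ^ q = ((x.toNNReal + y.toNNReal : ℝ≥0) : ℝ) ^ q := by rw [hxy]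
    _ = (((x.toNNReal + y.toNNReal) ^ q : ℝ≥0) : ℝ) := by rw [NNReal.coe_rpow]
    _ ≤ ((x.toNNReal ^ q + y.toNNReal ^ q : ℝ≥0) : ℝ) := by exact_mod_cast h
    _ = x ^ q + y ^ q := by
        simp [NNReal.coe_rpow, Real.coe_toNNReal _ hx, Real.coe_toNNReal _ hy]

lemma abs_rpow_sub_abs_rpow_le {q : ℝ} (hq : 0 ≤ q) (hq1 : q ≤ 1) (a b : ℝ) :
    |(|a| ^ q) - (|b| ^ q)| ≤ |a - b| ^ q := by
  have key : ∀ u v : ℝ, |u| ^ q ≤ |u - v| ^ q + |v| ^ q := by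
    intro u v
    calc |u| ^ q ≤ (|u - v| + |v|) ^ q := by
          apply Real.rpow_le_rpow (abs_nonneg _) _ hq
          calc |u| = |(u - v) + v| := by ring_nf
            _ ≤ |u - v| + |v| := abs_add_le _ _
      _ ≤ |u - v| ^ q + |v| ^ q := real_rpow_add_le (abs_nonneg _) (abs_nonneg _) hq hq1
  rw [abs_sub_le_iff]
  constructor
  · linarith [key a b]
  · have := key b a
    rw [abs_sub_comm] at this
    linarith

lemma abs_rpow_le_delta {q δ a : ℝ} (hq : 0 < q) (hq2 : q < 2) (hδ : 0 < δ) :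
    |a| ^ q ≤ δ ^ q + δ ^ (q - 2) * a ^ 2 := by
  rcases le_or_gt (|a|) δ with h | h
  · have h1 : |a| ^ q ≤ δ ^ q := Real.rpow_le_rpow (abs_nonneg _) h hq.le
    have : (0:ℝ) ≤ δ ^ (q - 2) * a ^ 2 := by positivity
    linarith
  · have ha : 0 < |a| := lt_trans hδ h
    have h1 : |a| ^ q = |a| ^ (q - 2) * a ^ 2 := by
      rw [← sq_abs, ← Real.rpow_natCast |a| 2, ← Real.rpow_add ha]
      ring_nf
    have h2 : |a| ^ (q - 2) ≤ δ ^ (q - 2) :=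
      Real.rpow_le_rpow_of_nonpos hδ h.le (by linarith)
    have hδq : (0:ℝ) ≤ δ ^ q := Real.rpow_nonneg hδ.le _
    have ha2 : (0:ℝ) ≤ a ^ 2 := sq_nonneg a
    nlinarith [mul_le_mul_of_nonneg_right h2 ha2]

lemma tendsto_zero_of_forall_le {f : ℕ → ℝ}
    (h : ∀ η : ℝ, 0 < η → ∃ g : ℕ → ℝ, Tendsto g atTop (nhds 0) ∧
      ∀ᶠ k in atTop, |f k| ≤ η + g k) :
    Tendsto f atTop (nhds 0) := by
  rw [NormedAddCommGroup.tendsto_nhds_zero]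
  intro η hη
  obtain ⟨g, hg, hfg⟩ := h (η / 3) (by linarith)
  have hg' : ∀ᶠ k in atTop, |g k| < η / 3 := by
    have := Metric.tendsto_nhds.mp hg (η / 3) (by linarith)
    simpa [Real.dist_eq] using this
  filter_upwards [hfg, hg'] with k h1 h2
  rw [Real.norm_eq_abs]
  calc |f k| ≤ η / 3 + g k := h1
    _ ≤ η / 3 + |g k| := by linarith [le_abs_self (g k)]
    _ < η := by linarith

lemma sq_diff_bound {δ b v : ℝ} (hδ : 0 < δ) :
    |v ^ 2 - b ^ 2| ≤ δ * b ^ 2 + (1 + 1/δ) * (v - b) ^ 2 := by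
  have hδc : δ * (1/δ) = 1 := by field_simp
  rw [abs_le]
  constructor
  · nlinarith [sq_nonneg (δ * b + (v - b)), sq_nonneg (v - b), mul_pos hδ hδ]
  · nlinarith [sq_nonneg (δ * b - (v - b)), sq_nonneg (v - b), mul_pos hδ hδ]

lemma pointwise_sq_bound {δ b v ψ : ℝ} (hδ : 0 < δ) (hψ : 0 ≤ ψ) :
    |2 * ψ * v ^ 2 - 2 * ψ * b ^ 2| ≤ δ * (2 * ψ * b ^ 2) + (2 + 2/δ) * (ψ * (v - b) ^ 2) := by
  calc |2 * ψ * v ^ 2 - 2 * ψ * b ^ 2| = 2 * ψ * |v ^ 2 - b ^ 2| := by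
        rw [show 2 * ψ * v ^ 2 - 2 * ψ * b ^ 2 = 2 * ψ * (v ^ 2 - b ^ 2) by ring, abs_mul,
          abs_of_nonneg (by linarith)]
    _ ≤ 2 * ψ * (δ * b ^ 2 + (1 + 1/δ) * (v - b) ^ 2) :=
        mul_le_mul_of_nonneg_left (sq_diff_bound hδ) (by linarith)
    _ = δ * (2 * ψ * b ^ 2) + (2 + 2/δ) * (ψ * (v - b) ^ 2) := by ring

section helpers
variable {Ω : Type*} [MeasurableSpace Ω] {μ : Measure Ω}

lemma psiD_comp_aesm (p e : ℝ) (f : Lp ℝ 2 μ) :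
    AEStronglyMeasurable (fun x => psiD p e ((f x) ^ 2)) μ :=
  ((psiD_measurable p e).comp_aemeasurable
    ((Lp.aestronglyMeasurable f).aemeasurable.pow_const 2)).aestronglyMeasurable

lemma integrable_psiD_mul {p e : ℝ} (hp : 0 < p) (he : 0 ≤ e) (f : Lp ℝ 2 μ) {g : Ω → ℝ}
    (hg : Integrable g μ) : Integrable (fun x => psiD p e ((f x) ^ 2) * g x) μ :=
  hg.bdd_mul (c := p / 2 * e ^ (p - 2)) (psiD_comp_aesm p e f)
    (Eventually.of_forall fun x => by
      rw [Real.norm_eq_abs, abs_of_nonneg (psiD_nonneg hp he (sq_nonneg _))]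
      exact psiD_le hp _ _)

lemma integrable_abs_rpow [IsFiniteMeasure μ] {q : ℝ} (hq : 0 < q) (hq2 : q ≤ 2)
    {f : Ω → ℝ} (hf : MemLp f 2 μ) : Integrable (fun x => |f x| ^ q) μ := by
  refine Integrable.mono' ((integrable_const (1:ℝ)).add hf.integrable_sq) ?_ ?_
  · exact (Real.continuous_rpow_const hq.le).comp_aestronglyMeasurable
      hf.aestronglyMeasurable.norm
  · filter_upwards with x
    simp only [Pi.add_apply]
    rw [Real.norm_eq_abs, abs_of_nonneg (Real.rpow_nonneg (abs_nonneg _) _)]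
    rcases le_or_gt (|f x|) 1 with h | h
    · have h1 : |f x| ^ q ≤ 1 := Real.rpow_le_one (abs_nonneg _) h hq.le
      nlinarith [sq_nonneg (f x)]
    · have h1 : |f x| ^ q ≤ |f x| ^ (2:ℝ) :=
        Real.rpow_le_rpow_of_exponent_le h.le hq2
      have h2 : |f x| ^ (2:ℝ) = f x ^ 2 := by
        rw [show (2:ℝ) = ((2:ℕ):ℝ) by norm_num, Real.rpow_natCast |f x| 2, sq_abs]
      nlinarith

lemma integral_sq_eq_norm_sq (f : Lp ℝ 2 μ) : ∫ x, (f x) ^ 2 ∂μ = ‖f‖ ^ 2 := by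
  have h1 := MeasureTheory.L2.inner_def (𝕜 := ℝ) f f
  rw [real_inner_self_eq_norm_sq] at h1
  rw [h1]
  apply integral_congr_ae
  filter_upwards with x
  simp only [RCLike.inner_apply, starRingEnd_apply, star_trivial, sq]

lemma integral_sub_sq_tendsto (wk : ℕ → Lp ℝ 2 μ) (w : Lp ℝ 2 μ)
    (hconv : Tendsto wk atTop (nhds w)) :
    Tendsto (fun k => ∫ x, (wk k x - w x) ^ 2 ∂μ) atTop (nhds 0) := by
  have hnorm : Tendsto (fun k => ‖wk k - w‖) atTop (nhds 0) :=
    tendsto_iff_norm_sub_tendsto_zero.mp hconv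
  have heq : ∀ k, ∫ x, (wk k x - w x) ^ 2 ∂μ = ‖wk k - w‖ ^ 2 := by
    intro k
    rw [← integral_sq_eq_norm_sq (wk k - w)]
    apply integral_congr_ae
    filter_upwards [Lp.coeFn_sub (wk k) w] with x hx
    rw [hx]
    simp
  simp_rw [heq]
  have : Tendsto (fun k => ‖wk k - w‖ ^ 2) atTop (nhds (0 ^ 2)) := hnorm.pow 2
  simpa using this

end helpers

/-- On a finite measure space, for `p ∈ (0,1)`: if `ε_k > 0` with `ε_k → 0`, `w_k → w` and
`v_k → w` in `L²(Ω,μ)`, and moreover `∫ ψ_{ε_k}'(w_k²)(v_k - w_k)² dμ → 0`, then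
`∫ 2 ψ_{ε_k}'(w_k²) v_k² dμ → p ∫ |w|^p dμ`. -/
theorem integral_psiD_vk_sq_tendsto {Ω : Type*} [MeasurableSpace Ω] (μ : Measure Ω)
    [IsFiniteMeasure μ] (p : ℝ) (hp : p ∈ Set.Ioo (0 : ℝ) 1)
    (wk vk : ℕ → Lp ℝ 2 μ) (w : Lp ℝ 2 μ)
    (hwconv : Tendsto wk atTop (nhds w)) (hvconv : Tendsto vk atTop (nhds w))
    (ε : ℕ → ℝ) (hε : ∀ k, 0 < ε k) (hεconv : Tendsto ε atTop (nhds 0))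
    (hcross : Tendsto
      (fun k => ∫ x, psiD p (ε k) ((wk k x) ^ 2) * (vk k x - wk k x) ^ 2 ∂μ)
      atTop (nhds 0)) :
    Tendsto (fun k => ∫ x, 2 * psiD p (ε k) ((wk k x) ^ 2) * (vk k x) ^ 2 ∂μ) atTop
      (nhds (p * ∫ x, |w x| ^ p ∂μ)) := by
  obtain ⟨hp0, hp1⟩ := hp
  have hp2 : p < 2 := by linarith
  set μr : ℝ := (μ Set.univ).toReal with hμrdef
  have hμr : 0 ≤ μr := ENNReal.toReal_nonneg
  set L : ℝ := ∫ x, |w x| ^ p ∂μ with hLdef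
  set J : ℕ → ℝ := fun k => ∫ x, |wk k x| ^ p ∂μ with hJdef
  set A : ℕ → ℝ := fun k => ∫ x, 2 * psiD p (ε k) ((wk k x) ^ 2) * (wk k x) ^ 2 ∂μ with hAdef
  set C : ℕ → ℝ := fun k => ∫ x, psiD p (ε k) ((wk k x) ^ 2) * (vk k x - wk k x) ^ 2 ∂μ
    with hCdef
  set I : ℕ → ℝ := fun k => ∫ x, 2 * psiD p (ε k) ((wk k x) ^ 2) * (vk k x) ^ 2 ∂μ with hIdef
  -- integrability facts
  have hw2int : ∀ k, Integrable (fun x => (wk k x) ^ 2) μ :=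
    fun k => (Lp.memLp (wk k)).integrable_sq
  have hv2int : ∀ k, Integrable (fun x => (vk k x) ^ 2) μ :=
    fun k => (Lp.memLp (vk k)).integrable_sq
  have hd2int : ∀ k, Integrable (fun x => (vk k x - wk k x) ^ 2) μ := by
    intro k
    have := ((Lp.memLp (vk k)).sub (Lp.memLp (wk k))).integrable_sq
    simpa [Pi.sub_apply] using this
  have hsubsq_int : ∀ k, Integrable (fun x => (wk k x - w x) ^ 2) μ := by
    intro k
    have := ((Lp.memLp (wk k)).sub (Lp.memLp w)).integrable_sq
    simpa [Pi.sub_apply] using this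
  have hwp_int : ∀ k, Integrable (fun x => |wk k x| ^ p) μ :=
    fun k => integrable_abs_rpow hp0 (by linarith) (Lp.memLp (wk k))
  have hwp : Integrable (fun x => |w x| ^ p) μ :=
    integrable_abs_rpow hp0 (by linarith) (Lp.memLp w)
  have hψv : ∀ k, Integrable (fun x => psiD p (ε k) ((wk k x) ^ 2) * (vk k x) ^ 2) μ :=
    fun k => integrable_psiD_mul hp0 (hε k).le (wk k) (hv2int k)
  have hψw : ∀ k, Integrable (fun x => psiD p (ε k) ((wk k x) ^ 2) * (wk k x) ^ 2) μ :=
    fun k => integrable_psiD_mul hp0 (hε k).le (wk k) (hw2int k)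
  have hψd : ∀ k, Integrable (fun x => psiD p (ε k) ((wk k x) ^ 2) * (vk k x - wk k x) ^ 2) μ :=
    fun k => integrable_psiD_mul hp0 (hε k).le (wk k) (hd2int k)
  have h2ψv : ∀ k, Integrable (fun x => 2 * psiD p (ε k) ((wk k x) ^ 2) * (vk k x) ^ 2) μ := by
    intro k
    have := (hψv k).const_mul 2
    simpa [mul_assoc] using this
  have h2ψw : ∀ k, Integrable (fun x => 2 * psiD p (ε k) ((wk k x) ^ 2) * (wk k x) ^ 2) μ := by
    intro k
    have := (hψw k).const_mul 2
    simpa [mul_assoc] using this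
  -- W_k := ∫ (w_k - w)² → 0
  have hW : Tendsto (fun k => ∫ x, (wk k x - w x) ^ 2 ∂μ) atTop (nhds 0) :=
    integral_sub_sq_tendsto wk w hwconv
  -- Step 1 : J → L
  have hJ : Tendsto J atTop (nhds L) := by
    have hJ0 : Tendsto (fun k => J k - L) atTop (nhds 0) := by
      apply tendsto_zero_of_forall_le
      intro η hη
      have hM0 : 0 < μr + 1 := by linarith
      set δ : ℝ := (η / (μr + 1)) ^ (1/p) with hδdef
      have hδ : 0 < δ := Real.rpow_pos_of_pos (div_pos hη hM0) _
      have hδp : δ ^ p = η / (μr + 1) := by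
        rw [hδdef, ← Real.rpow_mul (div_pos hη hM0).le, one_div,
          inv_mul_cancel₀ hp0.ne', Real.rpow_one]
      refine ⟨fun k => δ ^ (p-2) * ∫ x, (wk k x - w x) ^ 2 ∂μ, ?_, ?_⟩
      · have := hW.const_mul (δ ^ (p-2))
        simpa using this
      · filter_upwards with k
        have key : |J k - L| ≤ δ ^ p * μr + δ ^ (p-2) * ∫ x, (wk k x - w x) ^ 2 ∂μ := by
          have hsub : J k - L = ∫ x, (|wk k x| ^ p - |w x| ^ p) ∂μ :=
            (integral_sub (hwp_int k) hwp).symm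
          rw [hsub]
          have h1 : |∫ x, (|wk k x| ^ p - |w x| ^ p) ∂μ|
              ≤ ∫ x, |(|wk k x| ^ p - |w x| ^ p)| ∂μ := by
            simpa [Real.norm_eq_abs] using
              norm_integral_le_integral_norm (μ := μ) (fun x => |wk k x| ^ p - |w x| ^ p)
          refine h1.trans ?_
          have h2 : ∫ x, |(|wk k x| ^ p - |w x| ^ p)| ∂μ
              ≤ ∫ x, (δ ^ p + δ ^ (p-2) * (wk k x - w x) ^ 2) ∂μ := by
            refine integral_mono ((hwp_int k).sub hwp).abs
              ((integrable_const _).add ((hsubsq_int k).const_mul _)) ?_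
            intro x
            calc |(|wk k x| ^ p - |w x| ^ p)| ≤ |wk k x - w x| ^ p :=
                abs_rpow_sub_abs_rpow_le hp0.le hp1.le _ _
              _ ≤ δ ^ p + δ ^ (p-2) * (wk k x - w x) ^ 2 := abs_rpow_le_delta hp0 hp2 hδ
          refine h2.trans_eq ?_
          rw [integral_add (integrable_const _) ((hsubsq_int k).const_mul _),
            integral_const, integral_const_mul, smul_eq_mul, hμrdef, measureReal_def]
          ring
        refine key.trans ?_
        have hle : δ ^ p * μr ≤ η := by
          rw [hδp]
          calc η / (μr + 1) * μr ≤ η / (μr + 1) * (μr + 1) := by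
                refine mul_le_mul_of_nonneg_left (by linarith) (by positivity)
            _ = η := by field_simp
        linarith
    have := hJ0.add (tendsto_const_nhds (x := L))
    simpa using this
  -- Step 2 : A → p * L
  have hA : Tendsto A atTop (nhds (p * L)) := by
    have hEp : Tendsto (fun k => p * (ε k) ^ p * μr) atTop (nhds 0) := by
      have h1 : Tendsto (fun k => (ε k) ^ p) atTop (nhds 0) := by
        have hc : ContinuousAt (fun t : ℝ => t ^ p) 0 :=
          Real.continuousAt_rpow_const 0 p (Or.inr hp0.le)
        have := hc.tendsto.comp hεconv
        simpa [Function.comp_def, Real.zero_rpow hp0.ne'] using this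
      have := (h1.const_mul p).mul_const μr
      simpa using this
    have hbound : ∀ k, |A k - p * J k| ≤ p * (ε k) ^ p * μr := by
      intro k
      have hPJ : p * J k = ∫ x, p * |wk k x| ^ p ∂μ := (integral_const_mul p _).symm
      have hsub : A k - p * J k
          = ∫ x, (2 * psiD p (ε k) ((wk k x) ^ 2) * (wk k x) ^ 2 - p * |wk k x| ^ p) ∂μ := by
        rw [hPJ]
        exact (integral_sub (h2ψw k) ((hwp_int k).const_mul p)).symm
      rw [hsub]
      have h1 : |∫ x, (2 * psiD p (ε k) ((wk k x) ^ 2) * (wk k x) ^ 2 - p * |wk k x| ^ p) ∂μ|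
          ≤ ∫ x, |2 * psiD p (ε k) ((wk k x) ^ 2) * (wk k x) ^ 2 - p * |wk k x| ^ p| ∂μ := by
        exact
          norm_integral_le_integral_norm (μ := μ)
            (fun x => 2 * psiD p (ε k) ((wk k x) ^ 2) * (wk k x) ^ 2 - p * |wk k x| ^ p)
      refine h1.trans ?_
      have h2 : ∫ x, |2 * psiD p (ε k) ((wk k x) ^ 2) * (wk k x) ^ 2 - p * |wk k x| ^ p| ∂μ
          ≤ ∫ x, (p * (ε k) ^ p) ∂μ := by
        refine integral_mono ((h2ψw k).sub ((hwp_int k).const_mul p)).abs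
          (integrable_const _) ?_
        intro x
        show |2 * psiD p (ε k) ((wk k x) ^ 2) * (wk k x) ^ 2 - p * |wk k x| ^ p| ≤ p * (ε k) ^ p
        rw [abs_le]
        constructor
        · linarith [le_two_psiD_mul_sq hp0 hp2 (hε k) (wk k x)]
        · have h3 := two_psiD_mul_sq_le (ε := ε k) hp0 (wk k x)
          have h4 : (0:ℝ) ≤ p * (ε k) ^ p :=
            mul_nonneg hp0.le (Real.rpow_nonneg (hε k).le _)
          linarith
      refine h2.trans_eq ?_
      rw [integral_const, smul_eq_mul, hμrdef, measureReal_def]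
      ring
    have hA0 : Tendsto (fun k => A k - p * J k) atTop (nhds 0) :=
      squeeze_zero_norm (fun k => by simpa [Real.norm_eq_abs] using hbound k) hEp
    have := hA0.add (hJ.const_mul p)
    simpa using this
  -- Step 3 : I - A → 0
  have hL0 : 0 ≤ L := integral_nonneg fun x => Real.rpow_nonneg (abs_nonneg _) _
  have hpL : 0 ≤ p * L := mul_nonneg hp0.le hL0
  have hIA : Tendsto (fun k => I k - A k) atTop (nhds 0) := by
    apply tendsto_zero_of_forall_le
    intro η hη
    set δ : ℝ := η / (p * L + 1) with hδdef
    have hδ : 0 < δ := div_pos hη (by linarith)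
    refine ⟨fun k => δ * |A k - p * L| + (2 + 2/δ) * C k, ?_, ?_⟩
    · have h1 : Tendsto (fun k => |A k - p * L|) atTop (nhds 0) := by
        have := (hA.sub (tendsto_const_nhds (x := p * L))).abs
        simpa using this
      have := (h1.const_mul δ).add (hcross.const_mul (2 + 2/δ))
      simpa using this
    · filter_upwards with k
      have key : |I k - A k| ≤ δ * A k + (2 + 2/δ) * C k := by
        have hsub : I k - A k = ∫ x, (2 * psiD p (ε k) ((wk k x) ^ 2) * (vk k x) ^ 2
            - 2 * psiD p (ε k) ((wk k x) ^ 2) * (wk k x) ^ 2) ∂μ :=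
          (integral_sub (h2ψv k) (h2ψw k)).symm
        rw [hsub]
        have h1 : |∫ x, (2 * psiD p (ε k) ((wk k x) ^ 2) * (vk k x) ^ 2
            - 2 * psiD p (ε k) ((wk k x) ^ 2) * (wk k x) ^ 2) ∂μ|
            ≤ ∫ x, |2 * psiD p (ε k) ((wk k x) ^ 2) * (vk k x) ^ 2
            - 2 * psiD p (ε k) ((wk k x) ^ 2) * (wk k x) ^ 2| ∂μ := by
          exact
            norm_integral_le_integral_norm (μ := μ)
              (fun x => 2 * psiD p (ε k) ((wk k x) ^ 2) * (vk k x) ^ 2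
                - 2 * psiD p (ε k) ((wk k x) ^ 2) * (wk k x) ^ 2)
        refine h1.trans ?_
        have h2 : ∫ x, |2 * psiD p (ε k) ((wk k x) ^ 2) * (vk k x) ^ 2
            - 2 * psiD p (ε k) ((wk k x) ^ 2) * (wk k x) ^ 2| ∂μ
            ≤ ∫ x, (δ * (2 * psiD p (ε k) ((wk k x) ^ 2) * (wk k x) ^ 2)
              + (2 + 2/δ) * (psiD p (ε k) ((wk k x) ^ 2) * (vk k x - wk k x) ^ 2)) ∂μ := by
          refine integral_mono ((h2ψv k).sub (h2ψw k)).abs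
            (((h2ψw k).const_mul δ).add ((hψd k).const_mul _)) ?_
          intro x
          exact pointwise_sq_bound hδ (psiD_nonneg hp0 (hε k).le (sq_nonneg _))
        refine h2.trans_eq ?_
        rw [integral_add ((h2ψw k).const_mul δ) ((hψd k).const_mul _),
          integral_const_mul, integral_const_mul]
      refine key.trans ?_
      have h2 : A k ≤ p * L + |A k - p * L| := by
        linarith [le_abs_self (A k - p * L)]
      have h3 : δ * A k ≤ δ * (p * L) + δ * |A k - p * L| := by
        have := mul_le_mul_of_nonneg_left h2 hδ.le
        linarith
      have h4 : δ * (p * L) ≤ η := by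
        rw [hδdef]
        calc η / (p * L + 1) * (p * L) ≤ η / (p * L + 1) * (p * L + 1) := by
              refine mul_le_mul_of_nonneg_left (by linarith) (by positivity)
          _ = η := by field_simp
      linarith
  -- conclude
  have := hIA.add hA
  simpa using this
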